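/- Let g be a probability measure on the response-type space T = (𝒵 → 𝒳) × (𝒳 → Y) that is consistent with the observed sub-densities, i.e. for every z ∈ 𝒵, x ∈ 𝒳 and measurable B ⊆ Y, g {t | t.1 z = x and t.2 x ∈ B} = ∫_B φ z x dμ. Then for every x ∈ 𝒳, every nonempty subset Z̃ ⊆ 𝒵 and every measurable B ⊆ Y: g {t | (t.1 z = x for all z ∈ Z̃) and t.2 x ∈ B} ≤ ∫_B (fun y => min over z ∈ Z̃ of φ z x y) dμ. In particular, taking B = Y, the g-mass of the sufficient-takers group {t | t.1 z = x for all z ∈ Z̃} is at most Ψ_{x,Z̃} := ∫_Y (min over z ∈ Z̃ of φ z x) dμ. -/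

import Mathlib

open MeasureTheory
open scoped ENNReal NNReal

/-- If a probability measure `g` on the response-type space
`T = (𝒵 → 𝒳) × (𝒳 → Y)` is consistent with the observed sub-densities `φ`, then for every
treatment value `x`, every nonempty subset `Zt` of instrument values and every measurable
`B`, the `g`-mass of the set of response types that realize `x` at every instrument value
in `Zt` with potential outcome in `B` is bounded by the integral over `B` of the pointwise
minimum of the sub-densities; in particular (taking `B = univ`) the mass of the
sufficient-takers group is at most `Ψ_{x,Zt}`. -/
theorem response_type_sufficient_takers_bound
    {𝒵 : Type*} [Fintype 𝒵] [Nonempty 𝒵]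
    {𝒳 : Type*} [Fintype 𝒳] [Nonempty 𝒳] [MeasurableSpace 𝒳] [MeasurableSingletonClass 𝒳]
    {Y : Type*} [MeasurableSpace Y] (μ : Measure Y)
    (φ : 𝒵 → 𝒳 → Y → NNReal) (hφ : ∀ z x, Measurable (φ z x))
    (g : Measure ((𝒵 → 𝒳) × (𝒳 → Y))) [IsProbabilityMeasure g]
    (hcons : ∀ (z : 𝒵) (x : 𝒳) (B : Set Y), MeasurableSet B →
      g {t | t.1 z = x ∧ t.2 x ∈ B} = ∫⁻ y in B, (φ z x y : ℝ≥0∞) ∂μ) :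
    ∀ (x : 𝒳) (Zt : Finset 𝒵), Zt.Nonempty →
      (∀ B : Set Y, MeasurableSet B →
        g {t | (∀ z ∈ Zt, t.1 z = x) ∧ t.2 x ∈ B} ≤
          ∫⁻ y in B, (⨅ z ∈ Zt, (φ z x y : ℝ≥0∞)) ∂μ) ∧
      g {t | ∀ z ∈ Zt, t.1 z = x} ≤ ∫⁻ y, (⨅ z ∈ Zt, (φ z x y : ℝ≥0∞)) ∂μ := by
  intro x Zt hZt
  have main : ∀ (Zt : Finset 𝒵), Zt.Nonempty →
      ∀ B : Set Y, MeasurableSet B →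
        g {t | (∀ z ∈ Zt, t.1 z = x) ∧ t.2 x ∈ B} ≤
          ∫⁻ y in B, (⨅ z ∈ Zt, (φ z x y : ℝ≥0∞)) ∂μ := by
    intro Zt hZt
    induction hZt using Finset.Nonempty.cons_induction with
    | singleton a =>
      intro B hB
      have : {t : (𝒵 → 𝒳) × (𝒳 → Y) | (∀ z ∈ ({a} : Finset 𝒵), t.1 z = x) ∧ t.2 x ∈ B}
          = {t | t.1 a = x ∧ t.2 x ∈ B} := by
        ext t; simp
      rw [this, hcons a x B hB]
      refine le_of_eq (lintegral_congr fun y => ?_)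
      simp [Finset.iInf_singleton]
    | cons a s ha hs ih =>
      intro B hB
      set F : Y → ℝ≥0∞ := fun y => ⨅ z ∈ s, (φ z x y : ℝ≥0∞) with hF
      have hFmeas : Measurable F := by
        apply Measurable.iInf
        intro z
        apply Measurable.iInf
        intro _
        exact (hφ z x).coe_nnreal_ennreal
      set C : Set Y := {y | (φ a x y : ℝ≥0∞) ≤ F y} with hC
      have hCmeas : MeasurableSet C := measurableSet_le (hφ a x).coe_nnreal_ennreal hFmeas
      set A : Set Y := B ∩ C with hA
      have hAmeas : MeasurableSet A := hB.inter hCmeas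
      -- the full infimum
      set G : Y → ℝ≥0∞ := fun y => ⨅ z ∈ Finset.cons a s ha, (φ z x y : ℝ≥0∞) with hG
      have hGeq : ∀ y, G y = (φ a x y : ℝ≥0∞) ⊓ F y := by
        intro y
        classical
        simp only [hG, Finset.cons_eq_insert, Finset.iInf_insert, hF]
      -- splitting the response-type set
      have hsub : {t : (𝒵 → 𝒳) × (𝒳 → Y) | (∀ z ∈ Finset.cons a s ha, t.1 z = x) ∧ t.2 x ∈ B}
          ⊆ {t | t.1 a = x ∧ t.2 x ∈ A} ∪
            {t | (∀ z ∈ s, t.1 z = x) ∧ t.2 x ∈ B \ A} := by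
        rintro t ⟨h1, h2⟩
        by_cases hc : t.2 x ∈ C
        · exact Or.inl ⟨h1 a (Finset.mem_cons_self a s), ⟨h2, hc⟩⟩
        · refine Or.inr ⟨fun z hz => h1 z (Finset.mem_cons_of_mem hz), h2, fun hmem => hc hmem.2⟩
      calc g {t : (𝒵 → 𝒳) × (𝒳 → Y) | (∀ z ∈ Finset.cons a s ha, t.1 z = x) ∧ t.2 x ∈ B}
          ≤ g ({t | t.1 a = x ∧ t.2 x ∈ A} ∪
              {t | (∀ z ∈ s, t.1 z = x) ∧ t.2 x ∈ B \ A}) := measure_mono hsub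
        _ ≤ g {t | t.1 a = x ∧ t.2 x ∈ A} +
              g {t | (∀ z ∈ s, t.1 z = x) ∧ t.2 x ∈ B \ A} := measure_union_le _ _
        _ ≤ (∫⁻ y in A, (φ a x y : ℝ≥0∞) ∂μ) + ∫⁻ y in B \ A, F y ∂μ := by
            gcongr
            · exact le_of_eq (hcons a x A hAmeas)
            · exact ih (B \ A) (hB.diff hAmeas)
        _ = (∫⁻ y in A, G y ∂μ) + ∫⁻ y in B \ A, G y ∂μ := by
            congr 1
            · refine setLIntegral_congr_fun hAmeas (fun y hy => ?_)
              rw [hGeq y, inf_eq_left.mpr hy.2]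
            · refine setLIntegral_congr_fun (hB.diff hAmeas) (fun y hy => ?_)
              have : ¬ ((φ a x y : ℝ≥0∞) ≤ F y) := fun h => hy.2 ⟨hy.1, h⟩
              rw [hGeq y, inf_eq_right.mpr (le_of_not_ge this)]
        _ = ∫⁻ y in B, G y ∂μ := by
            rw [hA, Set.diff_self_inter]
            exact lintegral_inter_add_diff G B hCmeas
  refine ⟨main Zt hZt, ?_⟩
  have := main Zt hZt Set.univ MeasurableSet.univ
  simpa using this
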